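/- Let σx = !![0, 1; 1, 0], σz = !![1, 0; 0, −1] ∈ Matrix (Fin 2) (Fin 2) ℂ, and let W := (1/4)·(1 ⊗ 1 ⊗ 1 ⊗ 1 + (1/√2)·(1 ⊗ σz ⊗ σz ⊗ 1 + σz ⊗ 1 ⊗ σx ⊗ σz)) (Kronecker products, factor order (A₁, A₂, B₁, B₂)). For bits x, a, y, b ∈ {0,1} define M(x,a) := (1/4)·(1 + (−1)^x σz) ⊗ (1 + (−1)^a σz), N₁(y) := (1/2)·(1 + (−1)^y σz) ⊗ ρ for an arbitrary positive semidefinite ρ ∈ Matrix (Fin 2) (Fin 2) ℂ with trace 1, and N₂(y,b) := (1/4)·(1 + (−1)^y σx) ⊗ (1 + (−1)^{b+y} σz). Then for all bits a, b, x, y: ∑_{x'∈{0,1}} trace(W · (M(x',a) ⊗ N₁(y))) = (1/2)·(1 + (−1)^{y+a}/√2) and ∑_{y'∈{0,1}} trace(W · (M(x,a) ⊗ N₂(y',b))) = (1/2)·(1 + (−1)^{x+b}/√2). In particular the success probability P_succ = (1/2)·[P(x=b | b'=0) + P(y=a | b'=1)] obtained from these strategies equals (2+√2)/4, which is strictly greater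 than 3/4. -/

import Mathlib

open Matrix Kronecker ComplexOrder

noncomputable section

/-- Pauli matrix σx. -/
def σx : Matrix (Fin 2) (Fin 2) ℂ := !![0, 1; 1, 0]

/-- Pauli matrix σz. -/
def σz : Matrix (Fin 2) (Fin 2) ℂ := !![1, 0; 0, -1]

/-- The Oreshkov–Costa–Brukner process matrix, factor order (A₁, A₂, B₁, B₂). -/
def Wproc : Matrix ((Fin 2 × Fin 2) × (Fin 2 × Fin 2)) ((Fin 2 × Fin 2) × (Fin 2 × Fin 2)) ℂ :=
  (1/4 : ℂ) •
    (((1 : Matrix (Fin 2) (Fin 2) ℂ) ⊗ₖ (1 : Matrix (Fin 2) (Fin 2) ℂ)) ⊗ₖ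
        ((1 : Matrix (Fin 2) (Fin 2) ℂ) ⊗ₖ (1 : Matrix (Fin 2) (Fin 2) ℂ))
      + (1 / (Real.sqrt 2 : ℂ)) •
        (((1 : Matrix (Fin 2) (Fin 2) ℂ) ⊗ₖ σz) ⊗ₖ (σz ⊗ₖ (1 : Matrix (Fin 2) (Fin 2) ℂ))
          + (σz ⊗ₖ (1 : Matrix (Fin 2) (Fin 2) ℂ)) ⊗ₖ (σx ⊗ₖ σz)))

/-- Alice's Choi matrix `M(x,a) = (1/4)(𝟙 + (−1)ˣ σz) ⊗ (𝟙 + (−1)ᵃ σz)`. -/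
def Mop (x a : Fin 2) : Matrix (Fin 2 × Fin 2) (Fin 2 × Fin 2) ℂ :=
  (1/4 : ℂ) • ((1 + ((-1 : ℂ) ^ (x : ℕ)) • σz) ⊗ₖ (1 + ((-1 : ℂ) ^ (a : ℕ)) • σz))

/-- Bob's Choi matrix for `b' = 1`: `N₁(y) = (1/2)(𝟙 + (−1)ʸ σz) ⊗ ρ`. -/
def N₁op (ρ : Matrix (Fin 2) (Fin 2) ℂ) (y : Fin 2) : Matrix (Fin 2 × Fin 2) (Fin 2 × Fin 2) ℂ :=
  (1/2 : ℂ) • ((1 + ((-1 : ℂ) ^ (y : ℕ)) • σz) ⊗ₖ ρ)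

/-- Bob's Choi matrix for `b' = 0`:
`N₂(y,b) = (1/4)(𝟙 + (−1)ʸ σx) ⊗ (𝟙 + (−1)^{b+y} σz)`. -/
def N₂op (y b : Fin 2) : Matrix (Fin 2 × Fin 2) (Fin 2 × Fin 2) ℂ :=
  (1/4 : ℂ) • ((1 + ((-1 : ℂ) ^ (y : ℕ)) • σx) ⊗ₖ
    (1 + ((-1 : ℂ) ^ ((b : ℕ) + (y : ℕ))) • σz))

/-! ### Auxiliary lemmas -/

lemma keyW (m1 m2 n1 n2 : Matrix (Fin 2) (Fin 2) ℂ) :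
    (Wproc * ((m1 ⊗ₖ m2) ⊗ₖ (n1 ⊗ₖ n2))).trace
      = (1/4 : ℂ) * (m1.trace * m2.trace * (n1.trace * n2.trace))
        + (1/4 : ℂ) * (1 / (Real.sqrt 2 : ℂ)) *
          (m1.trace * (σz * m2).trace * ((σz * n1).trace * n2.trace)
            + (σz * m1).trace * m2.trace * ((σx * n1).trace * (σz * n2).trace)) := by
  simp only [Wproc, smul_mul_assoc, add_mul, smul_add, ← Matrix.mul_kronecker_mul,
    Matrix.one_mul, Matrix.trace_smul, Matrix.trace_add, Matrix.trace_kronecker, smul_eq_mul]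
  ring

lemma zzmul : σz * σz = 1 := by
  rw [σz, Matrix.one_fin_two]; norm_num [Matrix.mul_fin_two]
lemma xzmul : σx * σz = !![0,-1;1,0] := by
  norm_num [σx, σz, Matrix.mul_fin_two]
lemma zxmul : σz * σx = !![0,1;-1,0] := by
  norm_num [σx, σz, Matrix.mul_fin_two]
lemma xxmul : σx * σx = 1 := by
  rw [σx, Matrix.one_fin_two]; norm_num [Matrix.mul_fin_two]
lemma trσz : σz.trace = 0 := by simp [σz, Matrix.trace_fin_two]
lemma trσx : σx.trace = 0 := by simp [σx, Matrix.trace_fin_two]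
lemma tr_one_add_z (c : ℂ) : (1 + c • σz).trace = 2 := by
  simp [Matrix.trace_add, Matrix.trace_smul, trσz, Matrix.trace_one]
lemma tr_one_add_x (c : ℂ) : (1 + c • σx).trace = 2 := by
  simp [Matrix.trace_add, Matrix.trace_smul, trσx, Matrix.trace_one]
lemma trzz (c : ℂ) : (σz * (1 + c • σz)).trace = 2 * c := by
  rw [Matrix.mul_add, Matrix.mul_one, Matrix.mul_smul, zzmul]
  simp [Matrix.trace_add, Matrix.trace_smul, trσz, Matrix.trace_one]; ring
lemma trxz (c : ℂ) : (σx * (1 + c • σz)).trace = 0 := by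
  rw [Matrix.mul_add, Matrix.mul_one, Matrix.mul_smul, xzmul]
  simp [Matrix.trace_add, Matrix.trace_smul, trσx, Matrix.trace_fin_two_of]
lemma trzx (c : ℂ) : (σz * (1 + c • σx)).trace = 0 := by
  rw [Matrix.mul_add, Matrix.mul_one, Matrix.mul_smul, zxmul]
  simp [Matrix.trace_add, Matrix.trace_smul, trσz, Matrix.trace_fin_two_of]
lemma trxx (c : ℂ) : (σx * (1 + c • σx)).trace = 2 * c := by
  rw [Matrix.mul_add, Matrix.mul_one, Matrix.mul_smul, xxmul]
  simp [Matrix.trace_add, Matrix.trace_smul, trσx, Matrix.trace_one]; ring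

lemma trW_MN₁ (ρ : Matrix (Fin 2) (Fin 2) ℂ) (hρtr : ρ.trace = 1) (x a y : Fin 2) :
    (Wproc * (Mop x a ⊗ₖ N₁op ρ y)).trace
      = (1/4 : ℂ) * (1 + ((-1 : ℂ) ^ ((y : ℕ) + (a : ℕ))) / (Real.sqrt 2 : ℂ)) := by
  rw [Mop, N₁op, Matrix.smul_kronecker, Matrix.kronecker_smul, mul_smul_comm, mul_smul_comm,
    Matrix.trace_smul, Matrix.trace_smul, keyW]
  simp only [tr_one_add_z, tr_one_add_x, trzz, trzx, trxx, trxz, hρtr, smul_eq_mul]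
  rw [pow_add]
  ring

lemma trW_MN₂ (x a y b : Fin 2) :
    (Wproc * (Mop x a ⊗ₖ N₂op y b)).trace
      = (1/4 : ℂ) * (1 + ((-1 : ℂ) ^ ((x : ℕ) + (b : ℕ))) / (Real.sqrt 2 : ℂ)) := by
  rw [Mop, N₂op, Matrix.smul_kronecker, Matrix.kronecker_smul, mul_smul_comm, mul_smul_comm,
    Matrix.trace_smul, Matrix.trace_smul, keyW]
  simp only [tr_one_add_z, tr_one_add_x, trzz, trzx, trxx, trxz, smul_eq_mul]
  have h : ((-1 : ℂ) ^ (y : ℕ)) * ((-1 : ℂ) ^ ((b : ℕ) + (y : ℕ)))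
      = (-1 : ℂ) ^ (b : ℕ) := by
    rw [← pow_add, show (y : ℕ) + ((b : ℕ) + (y : ℕ)) = (b : ℕ) + 2 * (y : ℕ) by ring,
      pow_add, pow_mul]
    norm_num
  rw [pow_add (-1 : ℂ) (x : ℕ) (b : ℕ)]
  linear_combination ((1/4 : ℂ) * (1/4) * (1/4) * (1 / (Real.sqrt 2 : ℂ)) *
    (2 * (-1 : ℂ) ^ (x : ℕ)) * 2 * 2 * 2) * h

theorem Wproc_violates_causal_inequality
    (ρ : Matrix (Fin 2) (Fin 2) ℂ) (hρ : ρ.PosSemidef) (hρtr : ρ.trace = 1)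
    (a b x y : Fin 2) :
    (∑ x' : Fin 2, (Wproc * (Mop x' a ⊗ₖ N₁op ρ y)).trace
        = (1/2 : ℂ) * (1 + ((-1 : ℂ) ^ ((y : ℕ) + (a : ℕ))) / (Real.sqrt 2 : ℂ))) ∧
    (∑ y' : Fin 2, (Wproc * (Mop x a ⊗ₖ N₂op y' b)).trace
        = (1/2 : ℂ) * (1 + ((-1 : ℂ) ^ ((x : ℕ) + (b : ℕ))) / (Real.sqrt 2 : ℂ))) ∧
    ((1/2 : ℂ) *
        ((1/4 : ℂ) * (∑ a' : Fin 2, ∑ b' : Fin 2, ∑ y' : Fin 2,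
            (Wproc * (Mop b' a' ⊗ₖ N₂op y' b')).trace)
          + (1/4 : ℂ) * (∑ a' : Fin 2, ∑ b' : Fin 2, ∑ x' : Fin 2,
            (Wproc * (Mop x' a' ⊗ₖ N₁op ρ a')).trace))
        = (((2 + Real.sqrt 2) / 4 : ℝ) : ℂ)) ∧
    (3/4 : ℝ) < (2 + Real.sqrt 2) / 4 := by
  have hsq : ∀ n : ℕ, ((-1 : ℂ) ^ (n + n)) = 1 := fun n => by
    rw [← two_mul, pow_mul]; norm_num
  have hone : (1 : ℝ) < Real.sqrt 2 := by
    rw [show (1 : ℝ) = Real.sqrt 1 by simp]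
    exact Real.sqrt_lt_sqrt (by norm_num) (by norm_num)
  have hne : (Real.sqrt 2 : ℂ) ≠ 0 := by
    exact_mod_cast Complex.ofReal_ne_zero.mpr (by positivity)
  have h2 : (Real.sqrt 2 : ℂ) * (Real.sqrt 2 : ℂ) = 2 := by
    norm_cast; exact Real.mul_self_sqrt (by norm_num)
  refine ⟨?_, ?_, ?_, ?_⟩
  · simp only [Fin.sum_univ_two, trW_MN₁ ρ hρtr _ a y]; ring
  · simp only [Fin.sum_univ_two, trW_MN₂ x a _ b]; ring
  · simp only [Fin.sum_univ_two, trW_MN₂, trW_MN₁ ρ hρtr, hsq]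
    push_cast
    field_simp
    linear_combination (-8 : ℂ) * h2
  · linarith

end
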